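/- In the network Prisoner's Dilemma with Pareto conditions, if u ∈ E = conv{U(s) : s ∈ Σ} satisfies -δ ≤ μ^i(u) ≤ 0, then the mean payoff ū_i = ∑_j K_{ij} u_{ij} satisfies DD - δ/(2π_i) ≤ ū_i ≤ CC. -/

import Mathlib

/-- In the network PD with Pareto conditions: if `u ∈ E = conv{U(s)}` and
`-δ ≤ μ^i(u) ≤ 0`, then `DD - δ/(2π_i) ≤ ∑_j K_{ij} u_{ij} ≤ CC`. -/
theorem network_mean_payoff_bounds (M : ℕ) (CC CD DC DD : ℝ)
    (hpay : CD < DD ∧ DD < CC ∧ CC < DC)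
    (K : Fin M → Fin M → ℝ) (hKnonneg : ∀ i j, 0 ≤ K i j) (hKrow : ∀ i, ∑ j, K i j = 1)
    (π : Fin M → ℝ) (hπpos : ∀ i, 0 < π i)
    (ω : Fin M → Fin M → ℝ) (hω : ∀ i j, ω i j = π i * K i j)
    (hsums : ∀ i, (∑ j, ω i j = π i) ∧ (∑ j, ω j i = π i))
    (hPareto : ∀ i j, 0 < ω i j →
      (ω i j + ω j i) * DD < ω i j * CD + ω j i * DC ∧
      ω i j * CD + ω j i * DC < (ω i j + ω j i) * CC)
    (U : (Fin M → Bool) → Fin M → Fin M → ℝ)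
    (hU : ∀ s i j, U s i j = if s i then (if s j then CC else CD)
                             else (if s j then DC else DD))
    (δ : ℝ) (hδ : 0 ≤ δ)
    (u : Fin M → Fin M → ℝ) (hu : u ∈ convexHull ℝ {x | ∃ s, x = U s})
    (i : Fin M)
    (hμ : -δ ≤ ∑ j, (ω i j * u i j - ω j i * u j i) ∧
          ∑ j, (ω i j * u i j - ω j i * u j i) ≤ 0) :
    DD - δ / (2 * π i) ≤ ∑ j, K i j * u i j ∧ ∑ j, K i j * u i j ≤ CC := by
  obtain ⟨h1, h2, h3⟩ := hpay
  have hωnn : ∀ p q, 0 ≤ ω p q := fun p q => by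
    rw [hω]; exact mul_nonneg (hπpos p).le (hKnonneg p q)
  have hzero : ∀ p q : Fin M, ω p q = 0 → ω q p = 0 := by
    intro p q hpq
    by_contra h
    have hpos : 0 < ω q p := lt_of_le_of_ne (hωnn q p) (Ne.symm h)
    have := (hPareto q p hpos).1
    rw [hpq] at this
    nlinarith
  -- per-edge bounds for pure profiles
  have hedge : ∀ (s : Fin M → Bool) j,
      (ω i j + ω j i) * DD ≤ ω i j * U s i j + ω j i * U s j i ∧
      ω i j * U s i j + ω j i * U s j i ≤ (ω i j + ω j i) * CC := by
    intro s j
    rw [hU, hU]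
    cases hsi : s i <;> cases hsj : s j <;> simp only [hsi, hsj, if_true, if_false,
      Bool.false_eq_true, Bool.true_eq_false, ite_true, ite_false]
    · constructor <;> nlinarith [hωnn i j, hωnn j i]
    · rcases eq_or_lt_of_le (hωnn j i) with hji | hji
      · have hij : ω i j = 0 := hzero j i hji.symm
        rw [hij, ← hji]
        constructor <;> nlinarith
      · have := hPareto j i hji
        constructor <;> nlinarith [this.1, this.2]
    · rcases eq_or_lt_of_le (hωnn i j) with hij | hij
      · have hji : ω j i = 0 := hzero i j hij.symm
        rw [hji, ← hij]
        constructor <;> nlinarith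
      · have := hPareto i j hij
        constructor <;> nlinarith [this.1, this.2]
    · constructor <;> nlinarith [hωnn i j, hωnn j i]
  -- the linear functional
  let L : (Fin M → Fin M → ℝ) →ₗ[ℝ] ℝ :=
    { toFun := fun x => ∑ j, (ω i j * x i j + ω j i * x j i)
      map_add' := fun x y => by
        rw [← Finset.sum_add_distrib]
        exact Finset.sum_congr rfl fun j _ => by simp [Pi.add_apply]; ring
      map_smul' := fun c x => by
        simp only [RingHom.id_apply, smul_eq_mul]
        rw [Finset.mul_sum]
        exact Finset.sum_congr rfl fun j _ => by simp [Pi.smul_apply, smul_eq_mul]; ring }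
  have hLpure : ∀ s : Fin M → Bool, L (U s) ∈ Set.Icc (2 * π i * DD) (2 * π i * CC) := by
    intro s
    have hlo : ∑ j, (ω i j + ω j i) * DD ≤ ∑ j, (ω i j * U s i j + ω j i * U s j i) :=
      Finset.sum_le_sum fun j _ => (hedge s j).1
    have hhi : ∑ j, (ω i j * U s i j + ω j i * U s j i) ≤ ∑ j, (ω i j + ω j i) * CC :=
      Finset.sum_le_sum fun j _ => (hedge s j).2
    have hsum : ∀ c : ℝ, ∑ j, (ω i j + ω j i) * c = 2 * π i * c := by
      intro c
      have : ∑ j, (ω i j + ω j i) * c = (∑ j, ω i j) * c + (∑ j, ω j i) * c := by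
        rw [Finset.sum_mul, Finset.sum_mul, ← Finset.sum_add_distrib]
        exact Finset.sum_congr rfl fun j _ => by ring
      rw [this, (hsums i).1, (hsums i).2]; ring
    constructor
    · rw [← hsum DD]; exact hlo
    · rw [show L (U s) = ∑ j, (ω i j * U s i j + ω j i * U s j i) from rfl, ← hsum CC]
      exact hhi
  have hC : Convex ℝ (L ⁻¹' Set.Icc (2 * π i * DD) (2 * π i * CC)) :=
    (convex_Icc _ _).linear_preimage L
  have hsub : {x : Fin M → Fin M → ℝ | ∃ s, x = U s} ⊆
      L ⁻¹' Set.Icc (2 * π i * DD) (2 * π i * CC) := by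
    rintro x ⟨s, rfl⟩
    exact hLpure s
  have hLu : L u ∈ Set.Icc (2 * π i * DD) (2 * π i * CC) :=
    convexHull_min hsub hC hu
  obtain ⟨hLlo, hLhi⟩ := hLu
  have hLu_eq : L u = ∑ j, (ω i j * u i j + ω j i * u j i) := rfl
  rw [hLu_eq] at hLlo hLhi
  obtain ⟨hμlo, hμhi⟩ := hμ
  -- split the sums
  have hsplit1 : ∑ j, (ω i j * u i j + ω j i * u j i)
      = (∑ j, ω i j * u i j) + ∑ j, ω j i * u j i := Finset.sum_add_distrib
  have hsplit2 : ∑ j, (ω i j * u i j - ω j i * u j i)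
      = (∑ j, ω i j * u i j) - ∑ j, ω j i * u j i := Finset.sum_sub_distrib _ _
  have hT : ∑ j, ω i j * u i j = π i * ∑ j, K i j * u i j := by
    rw [Finset.mul_sum]
    exact Finset.sum_congr rfl fun j _ => by rw [hω]; ring
  rw [hsplit1, hT] at hLlo hLhi
  rw [hsplit2, hT] at hμlo hμhi
  have hπ : 0 < π i := hπpos i
  have hdiv : δ / (2 * π i) * (2 * π i) = δ := by
    field_simp
  constructor
  · nlinarith [hLlo, hμlo, hdiv]
  · nlinarith [hLhi, hμhi]
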